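/- Let K be a fixed convex body in ℝ^d, let A₁, ..., A_t ∈ O(d), and for a convex set P define β(K, P) = sup{α ≥ 0 : ∃ a ∈ ℝ^d, ∃ i ∈ {1,...,t}, a + α·Aᵢ·K ⊆ P}. Then for any finite family ℱ of convex sets in ℝ^d (with bounded intersection) there exists a subfamily ℱ' ⊆ ℱ of cardinality at most t(d+1) such that β(K, ⋂ℱ) = β(K, ⋂ℱ'). -/

import Mathlib

open Metric Set

/-- β(K, P): the largest α ≥ 0 such that some translate of α·Aᵢ·K fits inside P, for a
fixed finite list of rotations A₁, …, A_t. -/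
noncomputable def betaParam (d t : ℕ) (K : Set (EuclideanSpace ℝ (Fin d)))
    (A : Fin t → Matrix (Fin d) (Fin d) ℝ) (P : Set (EuclideanSpace ℝ (Fin d))) : ℝ :=
  sSup {α : ℝ | 0 ≤ α ∧ ∃ (a : EuclideanSpace ℝ (Fin d)) (i : Fin t),
    (fun x => a + α • Matrix.toEuclideanLin (A i) x) '' K ⊆ P}

namespace Stmt13Aux

variable {d t : ℕ}

/-- The set whose sup is `betaParam`. -/
def fitSet (d t : ℕ) (K : Set (EuclideanSpace ℝ (Fin d)))
    (A : Fin t → Matrix (Fin d) (Fin d) ℝ) (P : Set (EuclideanSpace ℝ (Fin d))) : Set ℝ :=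
  {α : ℝ | 0 ≤ α ∧ ∃ (a : EuclideanSpace ℝ (Fin d)) (i : Fin t),
    (fun x => a + α • Matrix.toEuclideanLin (A i) x) '' K ⊆ P}

lemma norm_toEuclideanLin {M : Matrix (Fin d) (Fin d) ℝ}
    (hM : M ∈ Matrix.orthogonalGroup (Fin d) ℝ) (x : EuclideanSpace ℝ (Fin d)) :
    ‖Matrix.toEuclideanLin M x‖ = ‖x‖ := by
  have h1 : star M * M = 1 := (Matrix.mem_orthogonalGroup_iff' _ _).mp hM
  have key : Matrix.toEuclideanLin (star M) (Matrix.toEuclideanLin M x) = x := by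
    simp [Matrix.toEuclideanLin_apply, Matrix.mulVec_mulVec, h1]
  have h2 : (inner ℝ (Matrix.toEuclideanLin M x) (Matrix.toEuclideanLin M x) : ℝ)
      = inner ℝ x x := by
    calc (inner ℝ (Matrix.toEuclideanLin M x) (Matrix.toEuclideanLin M x) : ℝ)
        = inner ℝ (LinearMap.adjoint (Matrix.toEuclideanLin M) (Matrix.toEuclideanLin M x)) x :=
          (LinearMap.adjoint_inner_left _ _ _).symm
      _ = inner ℝ x x := by
          rw [← Matrix.toEuclideanLin_conjTranspose_eq_adjoint]
          rw [show M.conjTranspose = star M from rfl, key]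
  rw [real_inner_self_eq_norm_sq, real_inner_self_eq_norm_sq] at h2
  nlinarith [norm_nonneg x, norm_nonneg (Matrix.toEuclideanLin M x)]

lemma fitSet_mono {K : Set (EuclideanSpace ℝ (Fin d))}
    {A : Fin t → Matrix (Fin d) (Fin d) ℝ} {P Q : Set (EuclideanSpace ℝ (Fin d))}
    (h : P ⊆ Q) : fitSet d t K A P ⊆ fitSet d t K A Q := by
  rintro α ⟨h0, a, i, hsub⟩
  exact ⟨h0, a, i, hsub.trans h⟩

lemma fitSet_downward {K : Set (EuclideanSpace ℝ (Fin d))} (hconv : Convex ℝ K)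
    {x₀ : EuclideanSpace ℝ (Fin d)} (hx₀ : x₀ ∈ K)
    {A : Fin t → Matrix (Fin d) (Fin d) ℝ} {P : Set (EuclideanSpace ℝ (Fin d))} {α α' : ℝ}
    (h : α' ∈ fitSet d t K A P) (h0 : 0 ≤ α) (hle : α ≤ α') :
    α ∈ fitSet d t K A P := by
  obtain ⟨h0', a, i, hsub⟩ := h
  rcases eq_or_lt_of_le hle with rfl | hlt
  · exact ⟨h0, a, i, hsub⟩
  have hα' : 0 < α' := lt_of_le_of_lt h0 hlt
  set M := Matrix.toEuclideanLin (A i) with hM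
  refine ⟨h0, a + (α' - α) • M x₀, i, ?_⟩
  rintro _ ⟨x, hx, rfl⟩
  have hc0 : (0:ℝ) ≤ α / α' := by positivity
  have hc1 : (0:ℝ) ≤ 1 - α / α' := by
    have : α / α' ≤ 1 := (div_le_one hα').mpr hle
    linarith
  have hmem : (α / α') • x + (1 - α / α') • x₀ ∈ K := hconv hx hx₀ hc0 hc1 (by ring)
  have := hsub ⟨_, hmem, rfl⟩
  have heq : a + α' • M ((α / α') • x + (1 - α / α') • x₀)
      = a + (α' - α) • M x₀ + α • M x := by
    rw [map_add, map_smul, map_smul]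
    have h1 : α' • ((α / α') • M x) = α • M x := by
      rw [smul_smul, mul_div_cancel₀ _ (ne_of_gt hα')]
    have h2 : α' • ((1 - α / α') • M x₀) = (α' - α) • M x₀ := by
      rw [smul_smul]
      congr 1
      field_simp
    rw [smul_add, h1, h2]
    abel
  simpa only [← hM, ← heq] using this

lemma fitSet_bddAbove (hd : 0 < d) {K : Set (EuclideanSpace ℝ (Fin d))}
    (hint : (interior K).Nonempty)
    {A : Fin t → Matrix (Fin d) (Fin d) ℝ}
    (hA : ∀ i, A i ∈ Matrix.orthogonalGroup (Fin d) ℝ)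
    {P : Set (EuclideanSpace ℝ (Fin d))} (hP : Bornology.IsBounded P) :
    BddAbove (fitSet d t K A P) := by
  obtain ⟨x₀, hx₀⟩ := hint
  obtain ⟨r, hr, hball⟩ := Metric.isOpen_iff.mp isOpen_interior x₀ hx₀
  obtain ⟨R, hR⟩ := hP.subset_closedBall 0
  refine ⟨(4 * R) / r ⊔ 0, ?_⟩
  rintro α ⟨hα0, a, i, hsub⟩
  set e : EuclideanSpace ℝ (Fin d) := EuclideanSpace.single ⟨0, hd⟩ (r / 2) with he
  have hne : ‖e‖ = r / 2 := by
    rw [he, EuclideanSpace.norm_single]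
    exact abs_of_pos (by positivity)
  have hx₀K : x₀ ∈ K := interior_subset hx₀
  have hx₁K : x₀ + e ∈ K := by
    apply interior_subset (hball ?_)
    simp only [mem_ball, dist_eq_norm, add_sub_cancel_left, hne]
    linarith
  set M := Matrix.toEuclideanLin (A i) with hM
  have hp : a + α • M x₀ ∈ P := hsub ⟨x₀, hx₀K, rfl⟩
  have hq : a + α • M (x₀ + e) ∈ P := hsub ⟨x₀ + e, hx₁K, rfl⟩
  have hdist : dist (a + α • M x₀) (a + α • M (x₀ + e)) = α * (r / 2) := by
    rw [dist_eq_norm]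
    have : a + α • M x₀ - (a + α • M (x₀ + e)) = -(α • M e) := by
      rw [map_add]; module
    rw [this, norm_neg, norm_smul, Real.norm_eq_abs, abs_of_nonneg hα0,
      norm_toEuclideanLin (hA i), hne]
  have hRb : dist (a + α • M x₀) (a + α • M (x₀ + e)) ≤ 2 * R := by
    calc dist (a + α • M x₀) (a + α • M (x₀ + e))
        ≤ dist (a + α • M x₀) 0 + dist 0 (a + α • M (x₀ + e)) := dist_triangle _ _ _
      _ ≤ R + R := by
          refine add_le_add ?_ ?_
          · exact mem_closedBall.mp (hR hp)
          · rw [dist_comm]; exact mem_closedBall.mp (hR hq)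
      _ = 2 * R := by ring
  refine le_sup_of_le_left ?_
  rw [le_div_iff₀ hr]
  nlinarith [hdist ▸ hRb]

/-- Erosion of `C` by `α • A • K`. -/
def erode (α : ℝ) (M : Matrix (Fin d) (Fin d) ℝ) (K : Set (EuclideanSpace ℝ (Fin d)))
    (C : Set (EuclideanSpace ℝ (Fin d))) : Set (EuclideanSpace ℝ (Fin d)) :=
  {a | ∀ x ∈ K, a + α • Matrix.toEuclideanLin M x ∈ C}

lemma convex_erode {α : ℝ} {M : Matrix (Fin d) (Fin d) ℝ}
    {K C : Set (EuclideanSpace ℝ (Fin d))} (hC : Convex ℝ C) :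
    Convex ℝ (erode α M K C) := by
  intro a ha b hb s u hs hu hsu x hx
  have h := hC (ha x hx) (hb x hx) hs hu hsu
  have heq : s • (a + α • Matrix.toEuclideanLin M x) + u • (b + α • Matrix.toEuclideanLin M x)
      = s • a + u • b + (s + u) • (α • Matrix.toEuclideanLin M x) := by module
  rw [heq, hsu, one_smul] at h
  exact h

lemma fits_iff {α : ℝ} {M : Matrix (Fin d) (Fin d) ℝ}
    {K : Set (EuclideanSpace ℝ (Fin d))} {G : Finset (Set (EuclideanSpace ℝ (Fin d)))}
    {a : EuclideanSpace ℝ (Fin d)} :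
    ((fun x => a + α • Matrix.toEuclideanLin M x) '' K
      ⊆ ⋂₀ (G : Set (Set (EuclideanSpace ℝ (Fin d)))))
      ↔ a ∈ ⋂ C ∈ G, erode α M K C := by
  constructor
  · intro h
    simp only [mem_iInter]
    intro C hC x hx
    exact (h ⟨x, hx, rfl⟩) C hC
  · intro h
    rintro _ ⟨x, hx, rfl⟩ C hC
    exact (mem_iInter.mp (mem_iInter.mp h C) hC) x hx

lemma helly_step {K : Set (EuclideanSpace ℝ (Fin d))} {α : ℝ}
    {M : Matrix (Fin d) (Fin d) ℝ}
    {F : Finset (Set (EuclideanSpace ℝ (Fin d)))} (hF : ∀ C ∈ F, Convex ℝ C)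
    (hempty : ∀ a : EuclideanSpace ℝ (Fin d),
      ¬ ((fun x => a + α • Matrix.toEuclideanLin M x) '' K
        ⊆ ⋂₀ (F : Set (Set (EuclideanSpace ℝ (Fin d)))))) :
    ∃ G ⊆ F, G.card ≤ d + 1 ∧ ∀ a : EuclideanSpace ℝ (Fin d),
      ¬ ((fun x => a + α • Matrix.toEuclideanLin M x) '' K
        ⊆ ⋂₀ (G : Set (Set (EuclideanSpace ℝ (Fin d))))) := by
  by_contra hcon
  push_neg at hcon
  have hrank : Module.finrank ℝ (EuclideanSpace ℝ (Fin d)) = d := finrank_euclideanSpace_fin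
  have hne : (⋂ C ∈ F, erode α M K C).Nonempty := by
    apply Convex.helly_theorem' (𝕜 := ℝ) (fun C hC => convex_erode (hF C hC))
    intro I hI hIcard
    obtain ⟨a, ha⟩ := hcon I hI (by omega)
    exact ⟨a, fits_iff.mp ha⟩
  obtain ⟨a, ha⟩ := hne
  exact hempty a (fits_iff.mpr ha)

end Stmt13Aux

/-- For a convex body K, rotations A₁,…,A_t ∈ O(d), and a finite family ℱ
of convex sets with bounded intersection, there is a subfamily ℱ' of cardinality at most
t(d+1) with β(K, ⋂ℱ) = β(K, ⋂ℱ'). -/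
theorem stmt13 (d t : ℕ) (K : Set (EuclideanSpace ℝ (Fin d)))
    (hKc : IsCompact K) (hconv : Convex ℝ K) (hint : (interior K).Nonempty)
    (A : Fin t → Matrix (Fin d) (Fin d) ℝ)
    (hA : ∀ i, A i ∈ Matrix.orthogonalGroup (Fin d) ℝ)
    (F : Finset (Set (EuclideanSpace ℝ (Fin d)))) (hF : ∀ C ∈ F, Convex ℝ C)
    (hbdd : Bornology.IsBounded (⋂₀ (F : Set (Set (EuclideanSpace ℝ (Fin d)))))) :
    ∃ F' ⊆ F, F'.card ≤ t * (d + 1) ∧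
      betaParam d t K A (⋂₀ (F : Set (Set (EuclideanSpace ℝ (Fin d))))) =
        betaParam d t K A (⋂₀ (F' : Set (Set (EuclideanSpace ℝ (Fin d))))) := by
  classical
  obtain ⟨x₀, hx₀i⟩ := hint
  have hx₀ : x₀ ∈ K := interior_subset hx₀i
  have hbeta : ∀ P, betaParam d t K A P = sSup (Stmt13Aux.fitSet d t K A P) := fun _ => rfl
  rcases Nat.eq_zero_or_pos t with rfl | ht
  · -- no rotations at all: β is always sSup ∅ = 0
    refine ⟨∅, Finset.empty_subset _, by simp, ?_⟩
    have h0 : ∀ P, betaParam d 0 K A P = 0 := by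
      intro P
      rw [hbeta]
      have : Stmt13Aux.fitSet d 0 K A P = ∅ :=
        Set.eq_empty_of_forall_notMem (by rintro α ⟨-, -, i, -⟩; exact i.elim0)
      rw [this, Real.sSup_empty]
    rw [h0, h0]
  rcases Nat.eq_zero_or_pos d with rfl | hd
  · -- dimension 0: the space is a single point and β is always 0
    have hsub : ∀ x y : EuclideanSpace ℝ (Fin 0), x = y := fun x y =>
      (WithLp.equiv 2 _).injective (Subsingleton.elim _ _)
    have h0 : ∀ P : Set (EuclideanSpace ℝ (Fin 0)), betaParam 0 t K A P = 0 := by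
      intro P
      rw [hbeta]
      rcases eq_empty_or_nonempty P with rfl | ⟨p, hp⟩
      · have : Stmt13Aux.fitSet 0 t K A ∅ = ∅ :=
          Set.eq_empty_of_forall_notMem (by
            rintro α ⟨-, a, i, hs⟩
            exact absurd (hs ⟨x₀, hx₀, rfl⟩) (notMem_empty _))
        rw [this, Real.sSup_empty]
      · have hIci : Ici (0:ℝ) ⊆ Stmt13Aux.fitSet 0 t K A P := by
          intro α hα
          refine ⟨hα, p, ⟨0, ht⟩, ?_⟩
          rintro _ ⟨x, hx, rfl⟩
          show p + α • Matrix.toEuclideanLin (A ⟨0, ht⟩) x ∈ P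
          rw [hsub (p + α • Matrix.toEuclideanLin (A ⟨0, ht⟩) x) p]
          exact hp
        apply Real.sSup_of_not_bddAbove
        rintro ⟨b, hb⟩
        have h1 : max b 0 + 1 ∈ Stmt13Aux.fitSet 0 t K A P := by
          apply hIci
          have := le_max_right b 0
          simp only [mem_Ici]
          linarith
        have h2 : max b 0 + 1 ≤ b := hb h1
        have h3 : b ≤ max b 0 := le_max_left _ _
        linarith
    exact ⟨∅, Finset.empty_subset _, by simp, by rw [h0, h0]⟩
  -- main case: d > 0, t > 0
  set S := Stmt13Aux.fitSet d t K A
      (⋂₀ (F : Set (Set (EuclideanSpace ℝ (Fin d))))) with hSdef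
  have hSbdd : BddAbove S := Stmt13Aux.fitSet_bddAbove hd ⟨x₀, hx₀i⟩ hA hbdd
  set β := sSup S with hβdef
  have hβ0 : 0 ≤ β := by
    rcases eq_empty_or_nonempty S with h | ⟨γ, hγ⟩
    · rw [hβdef, h, Real.sSup_empty]
    · exact le_trans hγ.1 (le_csSup hSbdd hγ)
  have hnotin : ∀ α : ℝ, β < α → α ∉ S := fun α hα hmem =>
    absurd (le_csSup hSbdd hmem) (not_le.mpr hα)
  have key : ∀ n : ℕ, ∃ G : Finset (Set (EuclideanSpace ℝ (Fin d))), G ⊆ F ∧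
      G.card ≤ t * (d + 1) ∧
      ∀ γ ∈ Stmt13Aux.fitSet d t K A (⋂₀ (G : Set (Set (EuclideanSpace ℝ (Fin d))))),
        γ < β + 1 / (n + 1) := by
    intro n
    set α := β + 1 / (n + 1 : ℝ) with hα
    have hpos : (0:ℝ) < 1 / (n + 1) := by positivity
    have hβα : β < α := by rw [hα]; linarith
    have hαS : α ∉ S := hnotin α hβα
    have hi : ∀ (i : Fin t) (a : EuclideanSpace ℝ (Fin d)),
        ¬ ((fun x => a + α • Matrix.toEuclideanLin (A i) x) '' K
          ⊆ ⋂₀ (F : Set (Set (EuclideanSpace ℝ (Fin d))))) := by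
      intro i a h
      exact hαS ⟨by linarith, a, i, h⟩
    choose Gf hGf1 hGf2 hGf3 using fun i : Fin t => Stmt13Aux.helly_step hF (hi i)
    refine ⟨Finset.univ.biUnion Gf, Finset.biUnion_subset.mpr fun i _ => hGf1 i, ?_, ?_⟩
    · calc (Finset.univ.biUnion Gf).card ≤ ∑ i, (Gf i).card := Finset.card_biUnion_le
        _ ≤ ∑ _i : Fin t, (d + 1) := Finset.sum_le_sum fun i _ => hGf2 i
        _ = t * (d + 1) := by simp [Finset.sum_const, mul_comm]
    · intro γ hγ
      by_contra hcon
      push_neg at hcon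
      have hαG : α ∈ Stmt13Aux.fitSet d t K A
          (⋂₀ ((Finset.univ.biUnion Gf : Finset (Set (EuclideanSpace ℝ (Fin d)))) :
            Set (Set (EuclideanSpace ℝ (Fin d))))) :=
        Stmt13Aux.fitSet_downward hconv hx₀ hγ (by linarith) hcon
      obtain ⟨-, a, i, hsubi⟩ := hαG
      refine hGf3 i a (hsubi.trans ?_)
      apply Set.sInter_subset_sInter
      exact Finset.coe_subset.mpr (Finset.subset_biUnion_of_mem Gf (Finset.mem_univ i))
  choose G hG1 hG2 hG3 using key
  obtain ⟨H, hH⟩ := Finite.exists_infinite_fiber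
    (fun n : ℕ => (⟨G n, Finset.mem_powerset.mpr (hG1 n)⟩ :
      {X : Finset (Set (EuclideanSpace ℝ (Fin d))) // X ∈ F.powerset}))
  set F' := H.1 with hF'def
  have hfib : {n : ℕ | G n = F'}.Infinite := by
    have h1 : ((fun n : ℕ => (⟨G n, Finset.mem_powerset.mpr (hG1 n)⟩ :
        {X : Finset (Set (EuclideanSpace ℝ (Fin d))) // X ∈ F.powerset})) ⁻¹' {H}).Infinite :=
      Set.infinite_coe_iff.mp hH
    refine h1.mono fun n hn => ?_
    have : (⟨G n, Finset.mem_powerset.mpr (hG1 n)⟩ :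
        {X : Finset (Set (EuclideanSpace ℝ (Fin d))) // X ∈ F.powerset}) = H := hn
    exact congrArg Subtype.val this
  obtain ⟨n₀, hn₀⟩ := hfib.nonempty
  have hF'F : F' ⊆ F := Finset.mem_powerset.mp H.2
  refine ⟨F', hF'F, ?_, ?_⟩
  · rw [← hn₀]; exact hG2 n₀
  · set S' := Stmt13Aux.fitSet d t K A
        (⋂₀ (F' : Set (Set (EuclideanSpace ℝ (Fin d))))) with hS'def
    have hS'bound : ∀ γ ∈ S', γ ≤ β := by
      intro γ hγ
      by_contra hcon
      push_neg at hcon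
      obtain ⟨N, hN⟩ := exists_nat_one_div_lt (sub_pos.mpr hcon)
      obtain ⟨m, hm, hNm⟩ := hfib.exists_gt N
      have hγm : γ ∈ Stmt13Aux.fitSet d t K A
          (⋂₀ ((G m : Finset (Set (EuclideanSpace ℝ (Fin d)))) :
            Set (Set (EuclideanSpace ℝ (Fin d))))) := by
        rw [hm]; exact hγ
      have h3 := hG3 m γ hγm
      have h4 : (1:ℝ) / (m + 1) ≤ 1 / (N + 1) := by
        apply one_div_le_one_div_of_le (by positivity)
        have : (N:ℝ) < m := by exact_mod_cast hNm
        linarith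
      linarith
    have hge : sSup S' ≤ β := Real.sSup_le hS'bound hβ0
    have hle : β ≤ sSup S' := by
      rcases eq_empty_or_nonempty S with h | hne
      · rw [hβdef, h, Real.sSup_empty]
        exact Real.sSup_nonneg fun x hx => hx.1
      · refine csSup_le_csSup ⟨β, hS'bound⟩ hne ?_
        exact Stmt13Aux.fitSet_mono
          (Set.sInter_subset_sInter (Finset.coe_subset.mpr hF'F))
    rw [hbeta, hbeta]
    exact le_antisymm hle hge
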